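/- arXiv:1407.8129 — 3 statements merged into one kernel-verified Lean document; each statement's English description precedes it below -/
import Mathlib

section
/- If G is a connected graph in which c ≥ p−1 (the longest cycle has order at least the longest path order minus one), then every longest cycle C of G is a dominating cycle, i.e., the vertex set V(G)\V(C) is an independent set. -/
open SimpleGraph

variable {V : Type*} [Fintype V] [DecidableEq V]

/-- The order (number of vertices) of a longest path in `G`. -/
noncomputable def pathOrder (G : SimpleGraph V) : ℕ :=
  sSup {n | ∃ (u v : V) (w : G.Walk u v), w.IsPath ∧ n = w.length + 1}

/-- The order (number of vertices) of a longest cycle in `G`. -/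
noncomputable def cycleOrder (G : SimpleGraph V) : ℕ :=
  sSup {n | ∃ (u : V) (w : G.Walk u u), w.IsCycle ∧ n = w.length}

/-- `G` is `k`-connected: more than `k` vertices and deleting any fewer than `k`
vertices leaves a connected graph. -/
def IsKConnected (G : SimpleGraph V) (k : ℕ) : Prop :=
  k < Fintype.card V ∧
    ∀ S : Finset V, S.card < k → (G.induce {v | v ∉ S}).Connected

/-- The vertex connectivity of `G`. -/
noncomputable def connectivity (G : SimpleGraph V) : ℕ :=
  sSup {k | IsKConnected G k}

/-- The successor of `v` on the closed walk `w` (with the orientation of `w`). -/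
def cycSucc {G : SimpleGraph V} {u : V} (w : G.Walk u u) (v : V) : V :=
  w.getVert (w.support.idxOf v + 1)

/-- The predecessor of `v` on the closed walk `w`. -/
def cycPred {G : SimpleGraph V} {u : V} (w : G.Walk u u) (v : V) : V :=
  cycSucc w.reverse v

/-- The predecessor of `v` on the path `w`, oriented from `x` to `y`. -/
def pathPred {G : SimpleGraph V} {x y : V} (w : G.Walk x y) (v : V) : V :=
  w.getVert (w.support.idxOf v - 1)

/-- From any walk ending in the list `L`, extract a path that meets `L` exactly
at its endpoint. -/
lemma exit_lemma {G : SimpleGraph V} {s t : V} (P : G.Walk s t) (L : List V)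
    (ht : t ∈ L) : ∃ x, x ∈ L ∧ ∃ Q : G.Walk s x, Q.IsPath ∧
      ∀ y ∈ Q.support, y ∈ L → y = x := by
  induction P with
  | nil => exact ⟨_, ht, Walk.nil, by simp, by simp⟩
  | @cons s v t h P' ih =>
    by_cases hs : s ∈ L
    · exact ⟨_, hs, Walk.nil, by simp, by simp⟩
    · obtain ⟨x, hxL, Q', hQ', hprop⟩ := ih ht
      by_cases hsQ : s ∈ Q'.support
      · refine ⟨x, hxL, Q'.dropUntil s hsQ, hQ'.dropUntil hsQ, fun y hy hyL => ?_⟩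
        exact hprop y (Q'.support_dropUntil_subset hsQ hy) hyL
      · refine ⟨x, hxL, Walk.cons h Q', (Walk.cons_isPath_iff h Q').2 ⟨hQ', hsQ⟩,
          fun y hy hyL => ?_⟩
        rw [Walk.support_cons, List.mem_cons] at hy
        rcases hy with rfl | hy
        · exact absurd hyL hs
        · exact hprop y hy hyL

/-- Key lemma: if a path `Q` starting at a vertex `s` off a longest cycle `w`
meets the cycle exactly at its endpoint `x`, and `z` is another vertex off the
cycle and off `Q` adjacent to `s`, we get a contradiction with `p ≤ c + 1`. -/
lemma key_lemma {G : SimpleGraph V}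
    (h : pathOrder G ≤ cycleOrder G + 1)
    {u : V} (w : G.Walk u u) (hw : w.IsCycle) (hlong : w.length = cycleOrder G)
    {x s z : V} (hx : x ∈ w.support)
    (Q : G.Walk s x) (hQ : Q.IsPath)
    (hQw : ∀ y ∈ Q.support, y ∈ w.support → y = x)
    (hs : s ∉ w.support) (hz : z ∉ w.support) (hzQ : z ∉ Q.support)
    (hzs : G.Adj z s) : False := by
  classical
  have hw' : (w.rotate x hx).IsCycle := hw.rotate hx
  have hlen' : (w.rotate x hx).length = w.length := by
    have h1 := (Walk.support_rotate w x hx).perm.length_eq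
    rw [List.length_tail, List.length_tail, Walk.length_support, Walk.length_support] at h1
    omega
  have hmem : ∀ y, y ∈ (w.rotate x hx).support → y ∈ w.support := by
    intro y hy
    rw [Walk.support_eq_cons] at hy
    rcases List.mem_cons.mp hy with rfl | hy
    · exact hx
    · exact List.mem_of_mem_tail ((Walk.support_rotate w x hx).mem_iff.mp hy)
  have hnn : ¬ (w.rotate x hx).Nil := by
    rw [Walk.not_nil_iff_lt_length, hlen']
    have := hw.three_le_length; omega
  obtain ⟨v, hadj, t, ht⟩ := Walk.not_nil_iff.mp hnn
  rw [ht] at hw' hlen' hmem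
  have htp : t.IsPath := ((Walk.cons_isCycle_iff t hadj).mp hw').1
  have htlen : t.length + 1 = w.length := by simpa using hlen'
  have htmem : ∀ y ∈ t.support, y ∈ w.support := fun y hy => hmem y (by simp [hy])
  have hxr : x ∉ t.reverse.support.tail := by
    have hnd := htp.reverse.support_nodup
    rw [Walk.support_eq_cons] at hnd
    exact (List.nodup_cons.mp hnd).1
  have hrt_sub : ∀ y ∈ t.reverse.support.tail, y ∈ w.support ∧ y ≠ x := by
    intro y hy
    have hyt : y ∈ t.support := by
      have := List.mem_of_mem_tail hy
      rwa [Walk.support_reverse, List.mem_reverse] at this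
    refine ⟨htmem y hyt, ?_⟩
    rintro rfl; exact hxr hy
  have hsx : s ≠ x := by rintro rfl; exact hs hx
  have hQlen : 1 ≤ Q.length := by
    rcases Nat.eq_zero_or_pos Q.length with h0 | h0
    · exact absurd (Walk.eq_of_length_eq_zero h0) hsx
    · exact h0
  set W : G.Walk z v := Walk.cons hzs (Q.append t.reverse) with hW
  have hWp : W.IsPath := by
    rw [hW, Walk.cons_isPath_iff]
    constructor
    · rw [Walk.isPath_def, Walk.support_append]
      refine List.Nodup.append hQ.support_nodup htp.reverse.support_nodup.tail ?_
      intro y hyQ hyr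
      obtain ⟨hyw, hyx⟩ := hrt_sub y hyr
      exact hyx (hQw y hyQ hyw)
    · rw [Walk.mem_support_append_iff]
      rintro (hzQ' | hzr)
      · exact hzQ hzQ'
      · have : z ∈ t.support := by
          rwa [Walk.support_reverse, List.mem_reverse] at hzr
        exact hz (htmem z this)
  have hWlen : W.length = Q.length + t.length + 1 := by
    simp [hW, Walk.length_append]
  have hbdd : BddAbove {n | ∃ (u v : V) (p : G.Walk u v), p.IsPath ∧ n = p.length + 1} := by
    refine ⟨Fintype.card V, ?_⟩
    rintro n ⟨u', v', p, hp, rfl⟩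
    exact hp.length_lt
  have hle : W.length + 1 ≤ pathOrder G :=
    le_csSup hbdd ⟨z, v, W, hWp, rfl⟩
  rw [← hlong] at h
  omega

/-- If `G` is connected with `c ≥ p - 1`, then every longest cycle is dominating:
no two vertices off the cycle are adjacent. -/
theorem stmt7 (G : SimpleGraph V) (hconn : G.Connected)
    (h : pathOrder G ≤ cycleOrder G + 1)
    {u : V} (w : G.Walk u u) (hw : w.IsCycle)
    (hlong : w.length = cycleOrder G)
    {a b : V} (ha : a ∉ w.support) (hb : b ∉ w.support) :
    ¬ G.Adj a b := by
  intro hab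
  obtain ⟨P⟩ := hconn.preconnected b u
  obtain ⟨x, hx, Q, hQ, hprop⟩ := exit_lemma P w.support w.start_mem_support
  by_cases haQ : a ∈ Q.support
  · have hbR : b ∉ (Q.dropUntil a haQ).support := by
      have hnd := hQ.support_nodup
      have hsup : Q.support
          = (Q.takeUntil a haQ).support ++ (Q.dropUntil a haQ).support.tail := by
        conv_lhs => rw [← Q.take_spec haQ]
        rw [Walk.support_append]
      rw [hsup] at hnd
      have hdisj := List.disjoint_of_nodup_append hnd
      intro hbmem
      have hba : b ≠ a := (G.ne_of_adj hab).symm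
      have hbtail : b ∈ (Q.dropUntil a haQ).support.tail := by
        rcases List.mem_cons.mp (by rwa [Walk.support_eq_cons] at hbmem) with h' | h'
        · exact absurd h' hba
        · exact h'
      exact hdisj ((Q.takeUntil a haQ).start_mem_support) hbtail
    exact key_lemma h w hw hlong hx (Q.dropUntil a haQ) (hQ.dropUntil haQ)
      (fun y hy hyw => hprop y (Q.support_dropUntil_subset haQ hy) hyw)
      ha hb hbR hab.symm
  · exact key_lemma h w hw hlong hx Q hQ hprop hb ha haQ hab
end

section
/- Let G be a graph, C a longest cycle in G with a fixed orientation, and x a vertex not on C with all neighbors on C. Then x is not adjacent to any vertex of N(x)^+, the set of successors on C of the neighbors of x; moreover, no two distinct vertices of N(x)^+ are adjacent to each other. -/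
open SimpleGraph

variable {V : Type*} [Fintype V] [DecidableEq V]

section HopAux

variable {G : SimpleGraph V}

private lemma getVert_indexOf' {v w u : V} (p : G.Walk v w) (h : u ∈ p.support) :
    p.getVert (p.support.idxOf u) = u := by
  induction p with
  | nil => simp_all [Walk.mem_support_nil_iff]
  | cons r p ih =>
    rename_i a b c
    rw [Walk.support_cons] at h ⊢
    rcases eq_or_ne a u with rfl | hau
    · simp
    · rw [List.idxOf_cons_ne _ hau]
      have hu : u ∈ p.support := by
        rcases List.mem_cons.mp h with h' | h'
        · exact absurd h'.symm hau
        · exact h'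
      simpa [Walk.getVert_cons_succ] using ih hu

private lemma mem_darts_of_getVert' {v w : V} (p : G.Walk v w) {i : ℕ} (hi : i < p.length) :
    (⟨(p.getVert i, p.getVert (i+1)), p.adj_getVert_succ hi⟩ : G.Dart) ∈ p.darts := by
  induction p generalizing i with
  | nil => simp at hi
  | cons r p ih =>
    cases i with
    | zero =>
      simp [Walk.darts_cons, Walk.getVert_zero, Walk.getVert_cons_succ]
    | succ n =>
      rw [Walk.darts_cons]
      right
      show _ ∈ p.darts
      simpa [Walk.getVert_cons_succ] using ih (by simpa using hi)

private lemma dropLast_support_nodup' {u : V} {c : G.Walk u u} (hc : c.IsCycle) :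
    c.support.dropLast.Nodup := by
  have h3 := hc.three_le_length
  have htail : c.support.tail ≠ [] := by
    have hl := c.length_support
    intro h
    have : c.support.length ≤ 1 := by
      cases hs : c.support with
      | nil => simp
      | cons a l => rw [hs] at h; simp only [List.tail_cons] at h; simp [h]
    omega
  have hcons : c.support = u :: c.support.tail := c.support_eq_cons
  have hlast : c.support.tail.getLast htail = u := by
    rw [List.getLast_tail]
    exact c.getLast_support
  have htn : c.support.tail.Nodup := hc.support_nodup
  have hsplit := List.dropLast_append_getLast htail
  rw [hlast] at hsplit
  have hnd : (c.support.tail.dropLast ++ [u]).Nodup := hsplit.symm ▸ htn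
  rw [List.nodup_append] at hnd
  have hud : u ∉ c.support.tail.dropLast := fun h => hnd.2.2 u h u (by simp) rfl
  have hdl : c.support.dropLast = u :: c.support.tail.dropLast := by
    conv_lhs => rw [hcons]
    rw [List.dropLast_cons_of_ne_nil htail]
  rw [hdl]
  exact List.nodup_cons.mpr ⟨hud, hnd.1⟩

private lemma indexOf_lt_length_cycle' {u a : V} {c : G.Walk u u} (hc : c.IsCycle)
    (ha : a ∈ c.support) : c.support.idxOf a < c.length := by
  have h3 := hc.three_le_length
  have hlt : c.support.idxOf a < c.support.length := List.idxOf_lt_length_iff.mpr ha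
  rw [c.length_support] at hlt
  rcases Nat.lt_or_ge (c.support.idxOf a) c.length with h | h
  · exact h
  · exfalso
    have he : c.support.idxOf a = c.length := by omega
    have hgv := getVert_indexOf' c ha
    rw [he, c.getVert_length] at hgv
    have h0 : c.support.idxOf a = 0 := by rw [c.support_eq_cons, ← hgv]; exact List.idxOf_cons_self
    omega

private lemma eq_cycSucc_of_dart' {u : V} {c : G.Walk u u} (hc : c.IsCycle) {d : G.Dart}
    (hd : d ∈ c.darts) : d.snd = cycSucc c d.fst := by
  have hfst : d.fst ∈ c.support := Walk.dart_fst_mem_support_of_mem_darts _ hd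
  have hi : c.support.idxOf d.fst < c.length := indexOf_lt_length_cycle' hc hfst
  have hd0 := mem_darts_of_getVert' c hi
  have hnd : (c.darts.map (·.fst)).Nodup := by
    rw [Walk.map_fst_darts]; exact dropLast_support_nodup' hc
  have h1 : d.fst = (⟨(c.getVert (c.support.idxOf d.fst),
      c.getVert (c.support.idxOf d.fst + 1)), c.adj_getVert_succ hi⟩ : G.Dart).fst :=
    (getVert_indexOf' c hfst).symm
  have h2 := List.inj_on_of_nodup_map hnd hd hd0 h1
  show d.snd = c.getVert (c.support.idxOf d.fst + 1)
  conv_lhs => rw [h2]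

private lemma length_rotate' {u v : V} (c : G.Walk v v) (h : u ∈ c.support) :
    (c.rotate u h).length = c.length := by
  rw [Walk.rotate, Walk.length_append, Nat.add_comm, ← Walk.length_append, Walk.take_spec]

private lemma mem_tail_support_iff' {y : V} {c : G.Walk y y} (hc : ¬ c.Nil) (a : V) :
    a ∈ c.support.tail ↔ a ∈ c.support := by
  constructor
  · intro h; rw [c.support_eq_cons]; exact List.mem_cons_of_mem _ h
  · intro h
    rw [c.support_eq_cons] at h
    rcases List.mem_cons.mp h with rfl | h
    · obtain ⟨z, hz, q, rfl⟩ := Walk.not_nil_iff.mp hc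
      rw [Walk.support_cons, List.tail_cons]; exact q.end_mem_support
    · exact h

private lemma cycle_split' {u v : V} {w : G.Walk u u} (hw : w.IsCycle) (hv : v ∈ w.support) :
    ∃ (s : V) (h : G.Adj v s) (t : G.Walk s v),
      s = cycSucc w v ∧ t.IsPath ∧ t.length + 1 = w.length ∧
      (∀ a, a ∈ t.support ↔ a ∈ w.support) ∧
      (∀ d : G.Dart, d ∈ t.darts → d ∈ w.darts) ∧
      s(v, s) ∉ t.edges := by
  have hw1 := hw.rotate hv
  set w1 := w.rotate v hv with hw1def
  have hlen1 : w1.length = w.length := length_rotate' w hv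
  obtain ⟨s, hadj, t, heq⟩ := Walk.not_nil_iff.mp hw1.not_nil
  have hdt : ∀ d : G.Dart, d ∈ t.darts → d ∈ w.darts := by
    intro d hd
    have hmem : d ∈ w1.darts := by rw [heq, Walk.darts_cons]; exact List.mem_cons_of_mem _ hd
    exact (Walk.rotate_darts w v hv).mem_iff.mp hmem
  have hd0 : (⟨(v, s), hadj⟩ : G.Dart) ∈ w.darts := by
    have hmem : (⟨(v, s), hadj⟩ : G.Dart) ∈ w1.darts := by
      rw [heq, Walk.darts_cons]; exact List.mem_cons_self
    exact (Walk.rotate_darts w v hv).mem_iff.mp hmem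
  have hs : s = cycSucc w v := eq_cycSucc_of_dart' hw hd0
  have hcyc1 : w1.IsCycle := hw1
  rw [heq, Walk.cons_isCycle_iff] at hcyc1
  have hts : t.support = w1.support.tail := by rw [heq, Walk.support_cons, List.tail_cons]
  have hsup : ∀ a, a ∈ t.support ↔ a ∈ w.support := by
    intro a
    rw [hts, (Walk.support_rotate w v hv).mem_iff]
    exact mem_tail_support_iff' hw.not_nil a
  have hlt : t.length + 1 = w.length := by
    rw [← hlen1, heq, Walk.length_cons]
  exact ⟨s, hadj, t, hs, hcyc1.1, hlt, hsup, hdt, hcyc1.2⟩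

end HopAux

/-- Hopping lemma: if `C` is a longest cycle, `x ∉ V(C)` with `N(x) ⊆ V(C)`,
then `{x} ∪ N(x)⁺` is an independent set. -/
theorem stmt8 (G : SimpleGraph V) {u : V} (w : G.Walk u u) (hw : w.IsCycle)
    (hmax : ∀ (v : V) (w' : G.Walk v v), w'.IsCycle → w'.length ≤ w.length)
    {x : V} (hx : x ∉ w.support) (hnbr : ∀ y, G.Adj x y → y ∈ w.support) :
    (∀ v, G.Adj x v → ¬ G.Adj x (cycSucc w v)) ∧
    (∀ v v', G.Adj x v → G.Adj x v' → cycSucc w v ≠ cycSucc w v' →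
      ¬ G.Adj (cycSucc w v) (cycSucc w v')) := by
  constructor
  · -- Claim 1
    intro v hv hxs
    obtain ⟨s, hvs, t, hs, htp, hlen, hsup, hdarts, hedge⟩ := cycle_split' hw (hnbr v hv)
    rw [← hs] at hxs
    have hxt : x ∉ t.support := fun h => hx ((hsup x).mp h)
    set P : G.Walk s x := t.append (Walk.cons hv.symm Walk.nil) with hP
    have hPp : P.IsPath := by
      apply Walk.IsPath.mk'
      rw [hP, Walk.support_append, Walk.support_cons, Walk.support_nil, List.tail_cons]
      rw [List.nodup_append]
      exact ⟨htp.support_nodup, List.nodup_singleton x,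
        fun a ha b hb hab => hxt (by rwa [hab, List.mem_singleton.mp hb] at ha)⟩
    have hPe : s(x, s) ∉ P.edges := by
      rw [hP, Walk.edges_append, Walk.edges_cons, Walk.edges_nil]
      intro hmem
      rcases List.mem_append.mp hmem with h1 | h1
      · exact hxt (t.fst_mem_support_of_mem_edges h1)
      · rw [List.mem_singleton, Sym2.eq_iff] at h1
        rcases h1 with ⟨h1a, _⟩ | ⟨_, h1b⟩
        · exact hx (by rw [h1a]; exact hnbr v hv)
        · exact hvs.ne h1b.symm
    have hWc : (Walk.cons hxs P).IsCycle := (Walk.cons_isCycle_iff P hxs).mpr ⟨hPp, hPe⟩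
    have hle := hmax x _ hWc
    rw [Walk.length_cons, hP, Walk.length_append, Walk.length_cons, Walk.length_nil] at hle
    omega
  · -- Claim 2
    intro v v' hv hv' hne hadj2
    obtain ⟨s, hvs, t, hs, htp, hlen, hsup, hdarts, hedge⟩ := cycle_split' hw (hnbr v hv)
    rw [← hs] at hadj2 hne
    have hv'v : v' ≠ v := fun h => hne (by rw [h, hs])
    have hv't : v' ∈ t.support := (hsup v').mpr (hnbr v' hv')
    set A := t.takeUntil v' hv't with hA
    set B := t.dropUntil v' hv't with hB
    have hAB : A.append B = t := t.take_spec hv't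
    have hBnn : ¬ B.Nil := by
      intro h
      exact hv'v h.eq
    obtain ⟨s', hv's', B₂, hBeq⟩ := Walk.not_nil_iff.mp hBnn
    have hd' : (⟨(v', s'), hv's'⟩ : G.Dart) ∈ w.darts := by
      apply hdarts
      rw [← hAB, Walk.darts_append]
      apply List.mem_append_right
      rw [hBeq, Walk.darts_cons]
      exact List.mem_cons_self
    have hs' : s' = cycSucc w v' := eq_cycSucc_of_dart' hw hd'
    rw [← hs'] at hadj2 hne
    have hxA : x ∉ A.support := fun h => hx ((hsup x).mp (t.support_takeUntil_subset hv't h))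
    have hB2sub : ∀ a, a ∈ B₂.support → a ∈ t.support := by
      intro a ha
      have haB : a ∈ B.support := by
        rw [hBeq, Walk.support_cons]; exact List.mem_cons_of_mem _ ha
      rw [hB] at haB
      exact t.support_dropUntil_subset hv't haB
    have hxB₂ : x ∉ B₂.support := fun h => hx ((hsup x).mp (hB2sub _ h))
    have htsup : t.support = A.support ++ B₂.support := by
      rw [← hAB, Walk.support_append, hBeq, Walk.support_cons, List.tail_cons]
    have htnodup := htp.support_nodup
    rw [htsup, List.nodup_append] at htnodup
    obtain ⟨ndA, ndB₂, disj⟩ := htnodup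
    set P : G.Walk v' x :=
      A.reverse.append (Walk.cons hadj2 (B₂.append (Walk.cons hv.symm Walk.nil))) with hP
    have hPsup : P.support = A.support.reverse ++ (B₂.support ++ [x]) := by
      rw [hP, Walk.support_append, Walk.support_cons, List.tail_cons, Walk.support_append,
        Walk.support_cons, Walk.support_nil, List.tail_cons, Walk.support_reverse]
    have hPp : P.IsPath := by
      apply Walk.IsPath.mk'
      rw [hPsup, List.nodup_append]
      refine ⟨List.nodup_reverse.mpr ndA, ?_, ?_⟩
      · rw [List.nodup_append]
        exact ⟨ndB₂, List.nodup_singleton x,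
          fun a ha b hb hab => hxB₂ (by rwa [hab, List.mem_singleton.mp hb] at ha)⟩
      · intro a ha b hb hab
        subst hab
        have haA : a ∈ A.support := List.mem_reverse.mp ha
        rcases List.mem_append.mp hb with h1 | h1
        · exact disj a haA a h1 rfl
        · rw [List.mem_singleton] at h1
          exact hxA (h1 ▸ haA)
    have hsmem : s ∈ w.support := (hsup s).mp t.start_mem_support
    have hs'mem : s' ∈ w.support := (hsup s').mp (hB2sub s' B₂.start_mem_support)
    have hPe : s(x, v') ∉ P.edges := by
      rw [hP, Walk.edges_append, Walk.edges_cons, Walk.edges_append, Walk.edges_cons,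
        Walk.edges_nil]
      intro hmem
      rcases List.mem_append.mp hmem with h1 | h1
      · exact hxA (by simpa [Walk.support_reverse] using
          A.reverse.fst_mem_support_of_mem_edges h1)
      · rcases List.mem_cons.mp h1 with h2 | h2
        · rw [Sym2.eq_iff] at h2
          rcases h2 with ⟨rfl, _⟩ | ⟨rfl, _⟩
          · exact hx hsmem
          · exact hx hs'mem
        · rcases List.mem_append.mp h2 with h3 | h3
          · exact hxB₂ (B₂.fst_mem_support_of_mem_edges h3)
          · rw [List.mem_singleton, Sym2.eq_iff] at h3
            rcases h3 with ⟨h3a, _⟩ | ⟨_, h4⟩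
            · exact hx (by rw [h3a]; exact hnbr v hv)
            · exact hv'v h4
    have hWc : (Walk.cons hv' P).IsCycle := (Walk.cons_isCycle_iff P hv').mpr ⟨hPp, hPe⟩
    have hle := hmax x _ hWc
    have hABlen : A.length + B.length = t.length := by
      rw [← Walk.length_append, hAB]
    have hBlen : B.length = B₂.length + 1 := by rw [hBeq, Walk.length_cons]
    rw [Walk.length_cons, hP, Walk.length_append, Walk.length_reverse, Walk.length_cons,
      Walk.length_append, Walk.length_cons, Walk.length_nil] at hle
    omega
end

section
/- Let G be a graph and P a longest path in G with endpoints x and y where x and y are nonadjacent. If there exists a vertex z on P that is adjacent to x and whose predecessor on P (oriented from x to y) is adjacent to y, then G contains a cycle whose vertex set equals V(P). -/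
open SimpleGraph

variable {V : Type*} [Fintype V] [DecidableEq V]

/-- Crossing-chords rotation: if `P` is a longest path from `x` to `y` with
`x, y` nonadjacent, and some `z` on `P` satisfies `x ~ z` and `y ~ z⁻`, then `G`
has a cycle through exactly the vertices of `P`. -/
theorem stmt10 (G : SimpleGraph V) {x y : V} (P : G.Walk x y) (hP : P.IsPath)
    (hmax : ∀ (a b : V) (Q : G.Walk a b), Q.IsPath → Q.length ≤ P.length)
    (hxy : ¬ G.Adj x y)
    {z : V} (hz : z ∈ P.support) (hzx : z ≠ x)
    (h1 : G.Adj x z) (h2 : G.Adj y (pathPred P z)) :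
    ∃ (u : V) (w : G.Walk u u), w.IsCycle ∧
      ∀ a, a ∈ w.support ↔ a ∈ P.support := by
  classical
  have hzy : z ≠ y := by rintro rfl; exact hxy h1
  set Q := P.takeUntil z hz with hQdef
  set D := P.dropUntil z hz with hDdef
  have hspec : Q.append D = P := P.take_spec hz
  have hQp : Q.IsPath := hP.takeUntil hz
  have hDp : D.IsPath := hP.dropUntil hz
  have hQrnn : ¬ Q.reverse.Nil := Walk.not_nil_of_ne hzx
  obtain ⟨z', e, R, hR⟩ := Walk.not_nil_iff.mp hQrnn
  have hRp : R.IsPath := by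
    have := hQp.reverse; rw [hR] at this; exact this.of_cons
  have hQsupp : Q.support = R.support.reverse ++ [z] := by
    have : Q.reverse.support = z :: R.support := by rw [hR, Walk.support_cons]
    rw [Walk.support_reverse] at this
    rw [← Q.support.reverse_reverse, this, List.reverse_cons]
  have hzR : z ∉ R.support := by
    have := hQp.reverse; rw [hR, Walk.cons_isPath_iff] at this
    exact this.2
  have hQlen : Q.length = R.length + 1 := by
    have := congrArg Walk.length hR
    rwa [Walk.length_reverse, Walk.length_cons] at this
  have hPsupp : P.support = R.support.reverse ++ D.support := by
    rw [← hspec, Walk.support_append, hQsupp, List.append_assoc, List.singleton_append,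
      ← D.support_eq_cons]
  -- index of z in P.support
  have hidx : P.support.idxOf z = Q.length := by
    rw [hPsupp, List.idxOf_append_of_notMem (by simpa using hzR), D.support_eq_cons,
      List.idxOf_cons_self, List.length_reverse, Walk.length_support, hQlen]
  have hpred : pathPred P z = z' := by
    have h2' : pathPred P z = P.getVert R.length := by
      rw [pathPred, hidx, hQlen]; rfl
    rw [h2', ← hspec, Walk.getVert_append, if_pos (by omega)]
    have : Q.getVert R.length = Q.reverse.reverse.getVert R.length := by
      rw [Walk.reverse_reverse]
    rw [this, Walk.getVert_reverse, Walk.length_reverse, hQlen, Nat.add_sub_cancel_left, hR]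
    simp [Walk.getVert]
  have h2' : G.Adj y z' := hpred ▸ h2
  have hperm : (D.support ++ R.support).Perm P.support := by
    rw [hPsupp]
    exact (List.perm_append_comm).trans (((R.support.reverse_perm).symm).append_right D.support)
  have hWsupp : (D.append (Walk.cons h2' R)).support = D.support ++ R.support := by
    rw [Walk.support_append, Walk.support_cons, List.tail_cons]
  refine ⟨x, Walk.cons h1 (D.append (Walk.cons h2' R)), ?_, ?_⟩
  · rw [Walk.cons_isCycle_iff]
    constructor
    · rw [Walk.isPath_def, hWsupp]
      exact hperm.nodup_iff.mpr hP.support_nodup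
    · intro hmem
      rw [Walk.edges_append, Walk.edges_cons, List.mem_append, List.mem_cons] at hmem
      rcases hmem with hD | heq | hRmem
      · have hxD : x ∈ D.support := Walk.fst_mem_support_of_mem_edges _ hD
        have hx2 : x ∈ D.support.tail := by
          rw [D.support_eq_cons, List.mem_cons] at hxD
          exact hxD.resolve_left (Ne.symm hzx)
        have hPsupp2 : P.support = Q.support ++ D.support.tail := by
          rw [← hspec, Walk.support_append]
        have hnd := hP.support_nodup
        rw [hPsupp2] at hnd
        exact (List.disjoint_of_nodup_append hnd) Q.start_mem_support hx2
      · rw [Sym2.eq_iff] at heq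
        rcases heq with ⟨_, hzz'⟩ | ⟨_, hzy'⟩
        · exact hzR (hzz' ▸ R.start_mem_support)
        · exact hzy hzy'
      · exact hzR (Walk.snd_mem_support_of_mem_edges _ hRmem)
  · intro a
    rw [Walk.support_cons, List.mem_cons, hWsupp, hperm.mem_iff]
    constructor
    · rintro (rfl | h)
      · exact P.start_mem_support
      · exact h
    · exact fun h => Or.inr h
end
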